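/- arXiv:math/0003135 — 2 statements merged into one kernel-verified Lean document; each statement's English description precedes it below -/
import Mathlib

section
/- For all integers k ≥ 2 and all real ξ, the second central difference of p_k with unit step equals p_{k-1}: p_k(ξ+1) - 2 p_k(ξ) + p_k(ξ-1) = p_{k-1}(ξ). -/
open Finset

noncomputable def pPoly (k : ℕ) (ξ : ℝ) : ℝ :=
  (1 / (Nat.factorial (2 * k - 1) : ℝ)) *
    ∏ m ∈ Finset.Icc (-(k : ℤ) + 1) ((k : ℤ) - 1), (ξ - (m : ℝ))

lemma prod_shift_up (a b : ℤ) (ξ : ℝ) :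
    ∏ m ∈ Icc a b, (ξ + 1 - (m : ℝ)) = ∏ m ∈ Icc (a - 1) (b - 1), (ξ - (m : ℝ)) := by
  have h : Icc (a - 1) (b - 1) = Finset.map (addRightEmbedding (-1)) (Icc a b) := by
    rw [Finset.map_add_right_Icc]; congr 1 <;> ring
  rw [h, Finset.prod_map]
  refine Finset.prod_congr rfl fun m _ => ?_
  simp only [addRightEmbedding_apply]
  push_cast; ring

lemma prod_shift_down (a b : ℤ) (ξ : ℝ) :
    ∏ m ∈ Icc a b, (ξ - 1 - (m : ℝ)) = ∏ m ∈ Icc (a + 1) (b + 1), (ξ - (m : ℝ)) := by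
  have h : Icc (a + 1) (b + 1) = Finset.map (addRightEmbedding 1) (Icc a b) := by
    rw [Finset.map_add_right_Icc]
  rw [h, Finset.prod_map]
  refine Finset.prod_congr rfl fun m _ => ?_
  simp only [addRightEmbedding_apply]
  push_cast; ring

lemma peel_bot (a b : ℤ) (h : a ≤ b) (ξ : ℝ) :
    ∏ m ∈ Icc a b, (ξ - (m : ℝ)) = (ξ - a) * ∏ m ∈ Icc (a + 1) b, (ξ - (m : ℝ)) := by
  have h1 : Icc a b = insert a (Icc (a + 1) b) := by
    ext x; simp only [Finset.mem_Icc, Finset.mem_insert]; omega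
  rw [h1, Finset.prod_insert (by simp [Finset.mem_Icc])]

lemma peel_top (a b : ℤ) (h : a ≤ b) (ξ : ℝ) :
    ∏ m ∈ Icc a b, (ξ - (m : ℝ)) = (ξ - b) * ∏ m ∈ Icc a (b - 1), (ξ - (m : ℝ)) := by
  have h1 : Icc a b = insert b (Icc a (b - 1)) := by
    ext x; simp only [Finset.mem_Icc, Finset.mem_insert]; omega
  rw [h1, Finset.prod_insert (by simp [Finset.mem_Icc])]

theorem pPoly_second_difference (k : ℕ) (hk : 2 ≤ k) (ξ : ℝ) :
    pPoly k (ξ + 1) - 2 * pPoly k ξ + pPoly k (ξ - 1) = pPoly (k - 1) ξ := by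
  obtain ⟨j, rfl⟩ : ∃ j, k = j + 2 := ⟨k - 2, by omega⟩
  have hk1 : j + 2 - 1 = j + 1 := rfl
  have hf1 : 2 * (j + 2) - 1 = 2 * j + 3 := by omega
  have hf2 : 2 * (j + 1) - 1 = 2 * j + 1 := by omega
  simp only [pPoly, hk1, hf1, hf2]
  set J : ℤ := (j : ℤ) with hJ
  have hIcc2 : Icc (-((j + 2 : ℕ) : ℤ) + 1) (((j + 2 : ℕ) : ℤ) - 1) = Icc (-J - 1) (J + 1) := by
    congr 1 <;> push_cast <;> ring
  have hIcc1 : Icc (-((j + 1 : ℕ) : ℤ) + 1) (((j + 1 : ℕ) : ℤ) - 1) = Icc (-J) J := by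
    congr 1 <;> push_cast <;> ring
  rw [hIcc2, hIcc1]
  rw [prod_shift_up, prod_shift_down]
  have e1 : (-J - 1) - 1 = -J - 2 := by ring
  have e2 : (J + 1) - 1 = J := by ring
  have e3 : (-J - 1) + 1 = -J := by ring
  have e4 : (J + 1) + 1 = J + 2 := by ring
  rw [e1, e2, e3, e4]
  have hjJ : (0:ℤ) ≤ J := Int.ofNat_nonneg j
  rw [peel_bot (-J - 2) J (by omega), show (-J - 2) + 1 = -J - 1 by ring,
      peel_bot (-J - 1) J (by omega), show (-J - 1) + 1 = -J by ring]
  rw [peel_bot (-J - 1) (J + 1) (by omega), show (-J - 1) + 1 = -J by ring,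
      peel_top (-J) (J + 1) (by omega), show (J + 1) - 1 = J by ring]
  rw [peel_top (-J) (J + 2) (by omega), show (J + 2) - 1 = J + 1 by ring,
      peel_top (-J) (J + 1) (by omega), show (J + 1) - 1 = J by ring]
  set C : ℝ := ∏ m ∈ Icc (-J) J, (ξ - (m : ℝ)) with hC
  have hfact : ((2 * j + 3).factorial : ℝ) =
      ((2 * j + 3 : ℕ) : ℝ) * ((2 * j + 2 : ℕ) : ℝ) * ((2 * j + 1).factorial : ℝ) := by
    rw [show 2 * j + 3 = (2 * j + 2) + 1 by ring, show 2 * j + 2 = (2 * j + 1) + 1 by ring]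
    push_cast [Nat.factorial_succ]
    ring
  have hne : ((2 * j + 1).factorial : ℝ) ≠ 0 := by positivity
  rw [hfact]
  have hcastJ : ((-J - 2 : ℤ) : ℝ) = -(j : ℝ) - 2 := by push_cast [hJ]; ring
  have hcast1 : ((-J - 1 : ℤ) : ℝ) = -(j : ℝ) - 1 := by push_cast [hJ]; ring
  have hcast2 : ((J + 1 : ℤ) : ℝ) = (j : ℝ) + 1 := by push_cast [hJ]; ring
  rw [hcastJ, hcast1, hcast2]
  push_cast
  simp only [hJ, Int.cast_natCast]
  field_simp
  ring
end

section
/- For all integers k ≥ 2 and all real ξ, the second central difference of q_k equals q_{k-1}: q_k(ξ+1) - 2 q_k(ξ) + q_k(ξ-1) = q_{k-1}(ξ). -/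
/-- The polynomial `q_k(ξ) = (ξ/(2k)) · p_k(ξ)` for `k ≥ 1`, with `q_0 ≡ 1`. -/
noncomputable def qPoly (k : ℕ) (ξ : ℝ) : ℝ :=
  if k = 0 then 1 else ξ / (2 * k) * pPoly k ξ

lemma prod_shift_int (a b c : ℤ) (f : ℤ → ℝ) :
    ∏ m ∈ Finset.Icc (a + c) (b + c), f m = ∏ m ∈ Finset.Icc a b, f (m + c) := by
  rw [← Finset.map_add_right_Icc, Finset.prod_map]
  rfl

theorem qPoly_second_difference (k : ℕ) (hk : 2 ≤ k) (ξ : ℝ) :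
    qPoly k (ξ + 1) - 2 * qPoly k ξ + qPoly k (ξ - 1) = qPoly (k - 1) ξ := by
  obtain ⟨i, rfl⟩ : ∃ i, k = i + 2 := ⟨k - 2, by omega⟩
  have h1 : (i + 2 - 1 : ℕ) = i + 1 := rfl
  simp only [qPoly, pPoly, h1, if_neg (show i + 2 ≠ 0 by omega),
    if_neg (show i + 1 ≠ 0 by omega)]
  have hf1 : 2 * (i + 2) - 1 = 2 * i + 3 := by omega
  have hf2 : 2 * (i + 1) - 1 = 2 * i + 1 := by omega
  rw [hf1, hf2]
  have hb1 : (-(↑(i + 2) : ℤ) + 1) = -(↑i : ℤ) - 1 := by push_cast; ring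
  have hb2 : ((↑(i + 2) : ℤ) - 1) = (↑i : ℤ) + 1 := by push_cast; ring
  have hb3 : (-(↑(i + 1) : ℤ) + 1) = -(↑i : ℤ) := by push_cast; ring
  have hb4 : ((↑(i + 1) : ℤ) - 1) = (↑i : ℤ) := by push_cast; ring
  rw [hb1, hb2, hb3, hb4]
  set N : ℤ := (i : ℤ) with hN
  set x : ℝ := (i : ℝ) with hx
  have hcast : ∀ m : ℤ, ((m : ℝ)) = (m : ℝ) := fun _ => rfl
  set Q : ℝ := ∏ m ∈ Finset.Icc (-N) N, (ξ - (m : ℝ)) with hQ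
  have hNx : ((N : ℤ) : ℝ) = x := by rw [hN, hx]; push_cast; ring
  -- A: the product at ξ + 1
  have hA : ∏ m ∈ Finset.Icc (-N - 1) (N + 1), (ξ + 1 - (m : ℝ))
      = (ξ + x + 2) * ((ξ + x + 1) * Q) := by
    have hs := prod_shift_int (-N - 2) N 1 (fun m => ξ + 1 - (m : ℝ))
    rw [show (-N - 2) + 1 = -N - 1 by ring] at hs
    have hs2 : ∏ m ∈ Finset.Icc (-N - 2) N, (ξ + 1 - ((m + 1 : ℤ) : ℝ))
        = ∏ m ∈ Finset.Icc (-N - 2) N, (ξ - (m : ℝ)) := by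
      refine Finset.prod_congr rfl fun m _ => ?_
      push_cast; ring
    rw [hs, hs2]
    have e : Finset.Icc (-N - 2) N = insert (-N - 2) (insert (-N - 1) (Finset.Icc (-N) N)) := by
      ext m
      simp only [Finset.mem_Icc, Finset.mem_insert]
      omega
    rw [e, Finset.prod_insert (by simp only [Finset.mem_insert, Finset.mem_Icc]; omega),
      Finset.prod_insert (by simp only [Finset.mem_Icc]; omega)]
    push_cast
    rw [hNx]
    ring
  -- B: the product at ξ
  have hB : ∏ m ∈ Finset.Icc (-N - 1) (N + 1), (ξ - (m : ℝ))
      = (ξ + x + 1) * ((ξ - x - 1) * Q) := by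
    have e : Finset.Icc (-N - 1) (N + 1) = insert (-N - 1) (insert (N + 1) (Finset.Icc (-N) N)) := by
      ext m
      simp only [Finset.mem_Icc, Finset.mem_insert]
      omega
    rw [e, Finset.prod_insert (by simp only [Finset.mem_insert, Finset.mem_Icc]; omega),
      Finset.prod_insert (by simp only [Finset.mem_Icc]; omega)]
    push_cast
    rw [hNx]
    ring
  -- C: the product at ξ - 1
  have hC : ∏ m ∈ Finset.Icc (-N - 1) (N + 1), (ξ - 1 - (m : ℝ))
      = (ξ - x - 1) * ((ξ - x - 2) * Q) := by
    have hs := prod_shift_int (-N) (N + 2) (-1) (fun m => ξ - 1 - (m : ℝ))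
    rw [show (-N) + (-1) = -N - 1 by ring, show (N + 2) + (-1) = N + 1 by ring] at hs
    have hs2 : ∏ m ∈ Finset.Icc (-N) (N + 2), (ξ - 1 - ((m + (-1) : ℤ) : ℝ))
        = ∏ m ∈ Finset.Icc (-N) (N + 2), (ξ - (m : ℝ)) := by
      refine Finset.prod_congr rfl fun m _ => ?_
      push_cast; ring
    rw [hs, hs2]
    have e : Finset.Icc (-N) (N + 2) = insert (N + 2) (insert (N + 1) (Finset.Icc (-N) N)) := by
      ext m
      simp only [Finset.mem_Icc, Finset.mem_insert]
      omega
    rw [e, Finset.prod_insert (by simp only [Finset.mem_insert, Finset.mem_Icc]; omega),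
      Finset.prod_insert (by simp only [Finset.mem_Icc]; omega)]
    push_cast
    rw [hNx]
    ring
  rw [hA, hB, hC]
  have hfac : ((2 * i + 3).factorial : ℝ)
      = (2 * x + 3) * ((2 * x + 2) * ((2 * i + 1).factorial : ℝ)) := by
    rw [show 2 * i + 3 = (2 * i + 2) + 1 from rfl, Nat.factorial_succ,
      show 2 * i + 2 = (2 * i + 1) + 1 from rfl, Nat.factorial_succ]
    push_cast [hx]
    ring
  rw [hfac]
  have hF : ((2 * i + 1).factorial : ℝ) ≠ 0 := Nat.cast_ne_zero.2 (Nat.factorial_ne_zero _)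
  have hx0 : (0 : ℝ) ≤ x := by rw [hx]; positivity
  have h2 : (2 * x + 3) ≠ 0 := by nlinarith
  have h3 : (2 * x + 2) ≠ 0 := by nlinarith
  have h4 : ((i : ℝ) + 2) ≠ 0 := by rw [← hx]; nlinarith
  have h5 : ((i : ℝ) + 1) ≠ 0 := by rw [← hx]; nlinarith
  push_cast
  rw [← hx]
  field_simp
  ring
end
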